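/- Let g be a Lie triple system over an infinite field F with char F ≠ 2, 3, ω : g × g × g → g a trilinear map such that [x,y,z]_λ := [x,y,z] + λ·ω(x,y,z) is a Lie triple system bracket for every λ ∈ F, and N : g → g a linear map such that φ_λ := id + λN satisfies φ_λ([x,y,z]_λ) = [φ_λ(x), φ_λ(y), φ_λ(z)] for all x,y,z ∈ g and all λ ∈ F. Then for all x1,x2,x3 ∈ g: (1) ω(x1,x2,x3) = [Nx1,x2,x3] + [x1,Nx2,x3] + [x1,x2,Nx3] − N[x1,x2,x3]; (2) N(ω(x1,x2,x3)) = [Nx1,Nx2,x3] + [Nx1,x2,Nx3] + [x1,Nx2,Nx3]; and (3) [Nx1,Nx2,Nx3] = 0. In particular N is a Nijenhuis operator. -/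
import Mathlib


/-- `N` is a Nijenhuis operator for the Lie triple system bracket `t`. -/
def IsNijenhuis {F : Type*} [Field F] {g : Type*} [AddCommGroup g] [Module F g]
    (t : g →ₗ[F] g →ₗ[F] g →ₗ[F] g) (N : Module.End F g) : Prop :=
  (∀ x y z : g, t (N x) (N y) (N z) = 0) ∧
  (∀ x y z : g,
    N (N (t x y z)) =
      N (t (N x) y z) + N (t x (N y) z) + N (t x y (N z)) -
        t (N x) (N y) z - t (N x) y (N z) - t x (N y) (N z))

/- STATEMENT 5: if ω generates a λ-parameter deformation of g which is trivial via
φ_λ = id + λN, then (1) ω = d0N, (2) Nω(x1,x2,x3) = [Nx1,Nx2,x3]+[Nx1,x2,Nx3]+[x1,Nx2,Nx3],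
(3) [Nx1,Nx2,Nx3] = 0; in particular N is a Nijenhuis operator. -/
theorem trivial_deformation_gives_nijenhuis {F : Type*} [Field F] [Infinite F]
    (hchar2 : (2 : F) ≠ 0) (hchar3 : (3 : F) ≠ 0)
    {g : Type*} [AddCommGroup g] [Module F g]
    (t : g →ₗ[F] g →ₗ[F] g →ₗ[F] g)
    (hskew : ∀ x y : g, t x x y = 0)
    (hjac : ∀ x y z : g, t x y z + t y z x + t z x y = 0)
    (hfund : ∀ x y a b c : g,
      t x y (t a b c) = t (t x y a) b c + t a (t x y b) c + t a b (t x y c))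
    (ω : g →ₗ[F] g →ₗ[F] g →ₗ[F] g)
    (hdef : ∀ (lam : F) (b : g → g → g → g),
      (∀ x y z : g, b x y z = t x y z + lam • ω x y z) →
      ((∀ x y : g, b x x y = 0) ∧
       (∀ x y z : g, b x y z + b y z x + b z x y = 0) ∧
       (∀ x1 x2 y1 y2 y3 : g,
         b x1 x2 (b y1 y2 y3) =
           b (b x1 x2 y1) y2 y3 + b y1 (b x1 x2 y2) y3 + b y1 y2 (b x1 x2 y3))))
    (N : Module.End F g)
    (hhom : ∀ (lam : F) (x y z : g),
      (t x y z + lam • ω x y z) + lam • N (t x y z + lam • ω x y z) =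
        t (x + lam • N x) (y + lam • N y) (z + lam • N z)) :
    (∀ x1 x2 x3 : g,
      ω x1 x2 x3 =
        t (N x1) x2 x3 + t x1 (N x2) x3 + t x1 x2 (N x3) - N (t x1 x2 x3)) ∧
    (∀ x1 x2 x3 : g,
      N (ω x1 x2 x3) =
        t (N x1) (N x2) x3 + t (N x1) x2 (N x3) + t x1 (N x2) (N x3)) ∧
    (∀ x1 x2 x3 : g, t (N x1) (N x2) (N x3) = 0) ∧
    IsNijenhuis t N := by
  classical
  -- abbreviations
  set S : g → g → g → g := fun x y z =>
    t (N x) y z + t x (N y) z + t x y (N z) with hS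
  set D : g → g → g → g := fun x y z =>
    t (N x) (N y) z + t (N x) y (N z) + t x (N y) (N z) with hD
  have key : ∀ (lam : F) (x y z : g),
      lam • (S x y z - ω x y z - N (t x y z))
        + (lam * lam) • (D x y z - N (ω x y z))
        + (lam * lam * lam) • (t (N x) (N y) (N z)) = 0 := by
    intro lam x y z
    have h := hhom lam x y z
    simp only [map_add, map_smul, LinearMap.add_apply, LinearMap.smul_apply,
      smul_smul] at h
    simp only [hS, hD]
    linear_combination (norm := module) -h
  have hABC : ∀ x y z : g,
      (S x y z - ω x y z - N (t x y z) = 0) ∧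
      (D x y z - N (ω x y z) = 0) ∧
      (t (N x) (N y) (N z) = 0) := by
    intro x y z
    set A := S x y z - ω x y z - N (t x y z) with hA
    set B := D x y z - N (ω x y z) with hB
    set C := t (N x) (N y) (N z) with hC
    have h1 := key 1 x y z
    have h2 := key (-1) x y z
    have h3 := key 2 x y z
    have hB0 : (2 : F) • B = 0 := by
      linear_combination (norm := module) h1 + h2
    have hBz : B = 0 := by
      rcases smul_eq_zero.mp hB0 with h | h
      · exact absurd h hchar2
      · exact h
    have hC0 : (6 : F) • C = 0 := by
      linear_combination (norm := module) h3 - (2:F) • h1 - hB0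
    have hCz : C = 0 := by
      rcases smul_eq_zero.mp hC0 with h | h
      · exact absurd (by
          have : (6 : F) = 2 * 3 := by norm_num
          exact this ▸ h) (mul_ne_zero hchar2 hchar3)
      · exact h
    have hAz : A = 0 := by
      linear_combination (norm := module) h1 - hBz - hCz
    exact ⟨hAz, hBz, hCz⟩
  have e1 : ∀ x y z : g,
      ω x y z = t (N x) y z + t x (N y) z + t x y (N z) - N (t x y z) := by
    intro x y z
    have h := (hABC x y z).1
    simp only [hS] at h
    linear_combination (norm := module) -h
  have e2 : ∀ x y z : g,
      N (ω x y z) = t (N x) (N y) z + t (N x) y (N z) + t x (N y) (N z) := by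
    intro x y z
    have h := (hABC x y z).2.1
    simp only [hD] at h
    linear_combination (norm := module) -h
  have e3 : ∀ x y z : g, t (N x) (N y) (N z) = 0 := fun x y z => (hABC x y z).2.2
  refine ⟨e1, e2, e3, e3, ?_⟩
  intro x y z
  have h := congrArg N (e1 x y z)
  simp only [map_add, map_sub] at h
  have h2 := e2 x y z
  linear_combination (norm := module) h - h2
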